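/- For every real z > 0, the inequalities 1/2 ≤ z(ln z − Φ(z)) ≤ 1 hold. -/

import Mathlib

open Real Filter Topology

/-- The digamma function `Φ(z) = Γ'(z)/Γ(z)`. -/
noncomputable def digamma (z : ℝ) : ℝ := deriv Real.Gamma z / Real.Gamma z

lemma aux_ne_neg_nat {z : ℝ} (hz : 0 < z) : ∀ m : ℕ, z ≠ -m := by
  intro m h
  have : (0:ℝ) ≤ (m:ℝ) := Nat.cast_nonneg m
  linarith [h ▸ hz]

lemma hasDerivAt_logGamma {z : ℝ} (hz : 0 < z) :
    HasDerivAt (fun x => Real.log (Real.Gamma x)) (digamma z) z := by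
  have hdiff : DifferentiableAt ℝ Real.Gamma z := Real.differentiableAt_Gamma (aux_ne_neg_nat hz)
  exact hdiff.hasDerivAt.log (Real.Gamma_pos_of_pos hz).ne'

lemma digamma_rec {z : ℝ} (hz : 0 < z) : digamma (z + 1) = digamma z + 1 / z := by
  have h1 : HasDerivAt (fun x => Real.log (Real.Gamma (x + 1))) (digamma (z + 1)) z := by
    have := (hasDerivAt_logGamma (by linarith : (0:ℝ) < z + 1)).comp z
      ((hasDerivAt_id z).add_const 1)
    rw [mul_one] at this
    exact this
  have h2 : HasDerivAt (fun x => Real.log x + Real.log (Real.Gamma x)) (z⁻¹ + digamma z) z :=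
    (Real.hasDerivAt_log hz.ne').add (hasDerivAt_logGamma hz)
  have hEq : (fun x => Real.log (Real.Gamma (x + 1))) =ᶠ[nhds z]
      (fun x => Real.log x + Real.log (Real.Gamma x)) := by
    filter_upwards [IsOpen.mem_nhds isOpen_Ioi hz] with x hx
    have hx' : (0:ℝ) < x := hx
    rw [Real.Gamma_add_one hx'.ne', Real.log_mul hx'.ne' (Real.Gamma_pos_of_pos hx').ne']
  have h1' : HasDerivAt (fun x => Real.log x + Real.log (Real.Gamma x)) (digamma (z + 1)) z :=
    h1.congr_of_eventuallyEq hEq.symm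
  have := h1'.unique h2
  rw [this, one_div, add_comm]

lemma digamma_le_log {z : ℝ} (hz : 0 < z) : digamma z ≤ Real.log z := by
  have hmem : z ∈ Set.Ioi (0:ℝ) := hz
  have hmem' : z + 1 ∈ Set.Ioi (0:ℝ) := by simp; linarith
  have h := Real.convexOn_log_Gamma.le_slope_of_hasDerivAt hmem hmem'
    (by linarith) (hasDerivAt_logGamma hz)
  rw [slope_def_field] at h
  simp only [Function.comp_apply] at h
  rw [Real.Gamma_add_one hz.ne', Real.log_mul hz.ne' (Real.Gamma_pos_of_pos hz).ne'] at h
  calc digamma z ≤ _ := h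
    _ = Real.log z := by ring

lemma log_le_digamma_add {z : ℝ} (hz : 0 < z) : Real.log z ≤ digamma z + 1 / z := by
  have hmem : z ∈ Set.Ioi (0:ℝ) := hz
  have hmem' : z + 1 ∈ Set.Ioi (0:ℝ) := by simp; linarith
  have h := Real.convexOn_log_Gamma.slope_le_of_hasDerivAt hmem hmem'
    (by linarith) (hasDerivAt_logGamma (by linarith : (0:ℝ) < z + 1))
  rw [slope_def_field] at h
  simp only [Function.comp_apply] at h
  rw [Real.Gamma_add_one hz.ne', Real.log_mul hz.ne' (Real.Gamma_pos_of_pos hz).ne'] at h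
  rw [digamma_rec hz] at h
  calc Real.log z = (Real.log z + Real.log (Real.Gamma z) - Real.log (Real.Gamma z)) / (z + 1 - z)
      := by field_simp; ring
    _ ≤ digamma z + 1 / z := h

lemma log_one_add_le {t : ℝ} (ht : 0 ≤ t) :
    Real.log (1 + t) ≤ t * (2 + t) / (2 * (1 + t)) := by
  set F : ℝ → ℝ := fun t => t * (2 + t) / (2 * (1 + t)) - Real.log (1 + t) with hF
  have hderiv : ∀ x : ℝ, 0 < x → HasDerivAt F
      ((((1 * (2 + x) + x * (0 + 1)) * (2 * (1 + x)) - x * (2 + x) * (2 * (0 + 1))) /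
        (2 * (1 + x)) ^ 2) - (0 + 1) / (1 + x)) x := by
    intro x hx
    have h1x : (0:ℝ) < 1 + x := by linarith
    have hnum : HasDerivAt (fun t : ℝ => t * (2 + t)) (1 * (2 + x) + x * (0 + 1)) x :=
      (hasDerivAt_id x).mul ((hasDerivAt_const x 2).add (hasDerivAt_id x))
    have hden : HasDerivAt (fun t : ℝ => 2 * (1 + t)) (2 * (0 + 1)) x :=
      ((hasDerivAt_const x 1).add (hasDerivAt_id x)).const_mul 2
    have hdiv := hnum.div hden (by positivity)
    have hlog : HasDerivAt (fun t : ℝ => Real.log (1 + t)) ((0 + 1) / (1 + x)) x :=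
      HasDerivAt.log ((hasDerivAt_const x 1).add (hasDerivAt_id x)) (by positivity)
    exact hdiv.sub hlog
  have hmono : MonotoneOn F (Set.Ici 0) := by
    apply monotoneOn_of_deriv_nonneg (convex_Ici 0)
    · apply ContinuousOn.sub
      · apply ContinuousOn.div (by fun_prop) (by fun_prop)
        intro x hx
        have : (0:ℝ) ≤ x := hx
        positivity
      · apply ContinuousOn.log (by fun_prop)
        intro x hx
        have : (0:ℝ) ≤ x := hx
        positivity
    · rw [interior_Ici]
      intro x hx
      exact ((hderiv x hx).differentiableAt).differentiableWithinAt
    · rw [interior_Ici]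
      intro x hx
      have hx' : (0:ℝ) < x := hx
      have h1x : (0:ℝ) < 1 + x := by linarith
      rw [(hderiv x hx').deriv]
      rw [sub_nonneg, div_le_div_iff₀ h1x (by positivity)]
      nlinarith [sq_nonneg x, hx'.le]
  have h0 : F 0 = 0 := by simp [hF]
  have := hmono (Set.self_mem_Ici) (Set.mem_Ici.2 ht) ht
  rw [h0] at this
  simpa [hF, sub_nonneg] using this

lemma log_ineq {x : ℝ} (hx : 0 < x) :
    Real.log (x + 1) - Real.log x ≤ 1 / (2 * x) + 1 / (2 * (x + 1)) := by
  have h1 : Real.log (x + 1) - Real.log x = Real.log (1 + 1 / x) := by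
    rw [← Real.log_div (by linarith) hx.ne']
    congr 1
    field_simp
  have h2 := log_one_add_le (t := 1 / x) (by positivity)
  have h3 : (1 / x) * (2 + 1 / x) / (2 * (1 + 1 / x)) = 1 / (2 * x) + 1 / (2 * (x + 1)) := by
    field_simp
    ring
  rw [h1]
  rw [h3] at h2
  exact h2

lemma key_lower (n : ℕ) : ∀ z : ℝ, 0 < z →
    1 / (2 * z) - 1 / (2 * (z + n)) ≤ Real.log z - digamma z := by
  induction n with
  | zero =>
    intro z hz
    simp only [Nat.cast_zero, add_zero, sub_self]
    linarith [digamma_le_log hz]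
  | succ n ih =>
    intro z hz
    have hz1 : (0:ℝ) < z + 1 := by linarith
    have h1 := ih (z + 1) hz1
    have hf := log_ineq hz
    have hrec : Real.log z - digamma z =
        (1 / z - (Real.log (z + 1) - Real.log z)) + (Real.log (z + 1) - digamma (z + 1)) := by
      rw [digamma_rec hz]; ring
    have e1 : (1:ℝ) / z - 1 / (2 * z) = 1 / (2 * z) := by
      field_simp
      ring
    have e2 : z + 1 + (n:ℝ) = z + ((n:ℕ) + 1 : ℕ) := by push_cast; ring
    rw [e2] at h1
    linarith [hrec, h1, hf, e1]

theorem z_mul_log_sub_digamma_bounds (z : ℝ) (hz : 0 < z) :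
    1 / 2 ≤ z * (Real.log z - digamma z) ∧ z * (Real.log z - digamma z) ≤ 1 := by
  have hupper : Real.log z - digamma z ≤ 1 / z := by
    linarith [log_le_digamma_add hz]
  have hlower : 1 / (2 * z) ≤ Real.log z - digamma z := by
    have hlim : Tendsto (fun n : ℕ => 1 / (2 * (z + n))) atTop (nhds 0) := by
      have h1 : Tendsto (fun n : ℕ => 2 * (z + (n:ℝ))) atTop atTop := by
        apply Tendsto.const_mul_atTop two_pos
        exact tendsto_atTop_add_const_left atTop z tendsto_natCast_atTop_atTop
      have h2 : Tendsto (fun n : ℕ => (2 * (z + (n:ℝ)))⁻¹) atTop (nhds 0) :=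
        tendsto_inv_atTop_zero.comp h1
      simpa only [one_div] using h2
    have hlim2 : Tendsto (fun n : ℕ => 1 / (2 * z) - 1 / (2 * (z + n))) atTop
        (nhds (1 / (2 * z) - 0)) := tendsto_const_nhds.sub hlim
    rw [sub_zero] at hlim2
    exact le_of_tendsto' hlim2 (fun n => key_lower n z hz)
  constructor
  · calc (1:ℝ) / 2 = z * (1 / (2 * z)) := by field_simp
      _ ≤ z * (Real.log z - digamma z) := by
        exact mul_le_mul_of_nonneg_left hlower hz.le
  · calc z * (Real.log z - digamma z) ≤ z * (1 / z) := mul_le_mul_of_nonneg_left hupper hz.le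
      _ = 1 := by field_simp
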